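/- arXiv:0705.0412 — 5 statements merged into one kernel-verified Lean document; each statement's English description precedes it below -/
import Mathlib

section
/- Let v be a Gauss word of length 2n, and for 0 ≤ k < 2n let rotᵏ v denote the cyclic rotation of v by k positions. For every nanoword w, the sum Σ_{k=0}^{2n−1} (−1)ᵏ ⟨rotᵏ v, w⟩ is unchanged when w is replaced by its image under the base point move. (This sum is a positive integer multiple of the pairing [[v], w] of the cyclic equivalence class of v with w, where cyclic equivalence of signed Gauss words is generated by Bx ∼ −xB.) -/
open Finset

/-- The canonical pattern of a word: each position is labelled by the index of the
first occurrence of its letter. Two words are isomorphic iff they have the same pattern. -/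
def patternOf {α : Type*} [DecidableEq α] (l : List α) : List ℕ :=
  l.map (fun a => l.idxOf a)

/-- The sub-word of `w` determined by a set `S` of letters: read, in order, exactly
those values of `w` lying in `S`. -/
def subword {α : Type*} [DecidableEq α] (w : List α) (S : Finset α) : List α :=
  w.filter (fun a => decide (a ∈ S))

/-- The pairing `⟨v, w⟩`: the sum, over all subsets `S` of the alphabet of `w` whose
induced sub-word is isomorphic to the pattern `v`, of `∏_{a ∈ S} sgn a`. -/
def pair {α : Type*} [DecidableEq α] (v : List ℕ) (w : List α) (sgn : α → ℤ) : ℤ :=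
  ∑ S ∈ w.toFinset.powerset,
    if patternOf (subword w S) = patternOf v then ∏ a ∈ S, sgn a else 0

section Aux

variable {α β : Type*} [DecidableEq α] [DecidableEq β]

lemma my_indexOf_le_of_getElem {l : List α} {t : ℕ} (h : t < l.length) {a : α}
    (ha : l[t] = a) : l.idxOf a ≤ t := by
  induction l generalizing t with
  | nil => simp at h
  | cons b l ih =>
    rcases t with _ | t
    · have hb : b = a := ha
      simp [List.idxOf_cons, hb]
    · rw [List.idxOf_cons]
      by_cases hb : b = a
      · simp [hb]
      · have hba : (b == a) = false := by simp [hb]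
        rw [hba, cond_false]
        have := ih (t := t) (by simpa using h) (by simpa using ha)
        omega

lemma length_eq_of_patternOf_eq {l : List α} {m : List β}
    (h : patternOf l = patternOf m) : l.length = m.length := by
  have := congrArg List.length h
  simpa [patternOf] using this

lemma rel_of_patternOf_eq {l : List α} {m : List β}
    (hp : patternOf l = patternOf m) {i j : ℕ} (hi : i < l.length) (hj : j < l.length)
    (hij : l[i] = l[j]) :
    m[i]'(length_eq_of_patternOf_eq hp ▸ hi) = m[j]'(length_eq_of_patternOf_eq hp ▸ hj) := by
  have hlen := length_eq_of_patternOf_eq hp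
  have key : ∀ t (ht : t < l.length),
      l.idxOf l[t] = m.idxOf (m[t]'(hlen ▸ ht)) := by
    intro t ht
    have h1 : (patternOf l)[t]'(by simpa [patternOf] using ht) =
        (patternOf m)[t]'(by simp only [patternOf, List.length_map]; omega) := by
      congr 1
    simpa [patternOf] using h1
  have h1 := key i hi
  have h2 := key j hj
  rw [hij] at h1
  have h3 : m.idxOf (m[i]'(hlen ▸ hi)) = m.idxOf (m[j]'(hlen ▸ hj)) := by
    rw [← h1, ← h2]
  have hmi : (m[i]'(hlen ▸ hi)) ∈ m := List.getElem_mem _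
  have hmj : (m[j]'(hlen ▸ hj)) ∈ m := List.getElem_mem _
  have e1 : m[m.idxOf (m[i]'(hlen ▸ hi))]'(List.idxOf_lt_length_iff.2 hmi) =
      m[i]'(hlen ▸ hi) := List.getElem_idxOf _
  have e2 : m[m.idxOf (m[j]'(hlen ▸ hj))]'(List.idxOf_lt_length_iff.2 hmj) =
      m[j]'(hlen ▸ hj) := List.getElem_idxOf _
  rw [← e1, ← e2]
  congr 1

lemma patternOf_eq_of_rel {l : List α} {m : List β} (h : l.length = m.length)
    (hrel : ∀ i j (hi : i < l.length) (hj : j < l.length),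
      l[i] = l[j] ↔ m[i]'(h ▸ hi) = m[j]'(h ▸ hj)) :
    patternOf l = patternOf m := by
  apply List.ext_getElem (by simpa [patternOf] using h)
  intro t h1 h2
  have ht : t < l.length := by simpa [patternOf] using h1
  have htm : t < m.length := h ▸ ht
  simp only [patternOf, List.getElem_map]
  have hmem : l[t] ∈ l := List.getElem_mem _
  have hmemm : m[t] ∈ m := List.getElem_mem _
  have hl1 : l.idxOf l[t] < l.length := List.idxOf_lt_length_iff.2 hmem
  have hm1 : m.idxOf m[t] < m.length := List.idxOf_lt_length_iff.2 hmemm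
  apply le_antisymm
  · have hs : m.idxOf m[t] < l.length := by omega
    have hg : m[m.idxOf m[t]] = m[t] := List.getElem_idxOf _
    have hl : l[m.idxOf m[t]]'hs = l[t] := (hrel _ _ hs ht).2 hg
    exact my_indexOf_le_of_getElem hs hl
  · have hg : l[l.idxOf l[t]] = l[t] := List.getElem_idxOf _
    have hm : m[l.idxOf l[t]]'(by omega) = m[t] := (hrel _ _ hl1 ht).1 hg
    exact my_indexOf_le_of_getElem (show l.idxOf l[t] < m.length by omega) hm

lemma patternOf_rotate_one {l : List α} {m : List β}
    (hp : patternOf l = patternOf m) :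
    patternOf (l.rotate 1) = patternOf (m.rotate 1) := by
  have hlen := length_eq_of_patternOf_eq hp
  have h : (l.rotate 1).length = (m.rotate 1).length := by
    simp [List.length_rotate, hlen]
  apply patternOf_eq_of_rel h
  intro i j hi hj
  have hi' : i < l.length := by simpa using hi
  have hj' : j < l.length := by simpa using hj
  have hlpos : 0 < l.length := by omega
  have hii : (i + 1) % l.length < l.length := Nat.mod_lt _ hlpos
  have hjj : (j + 1) % l.length < l.length := Nat.mod_lt _ hlpos
  rw [List.getElem_rotate l 1 i, List.getElem_rotate l 1 j,
      List.getElem_rotate m 1 i, List.getElem_rotate m 1 j]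
  constructor
  · intro hh
    have h2 := rel_of_patternOf_eq hp hii hjj hh
    convert h2 using 2 <;> rw [hlen]
  · intro hh
    have hmpos : 0 < m.length := by omega
    have h2 := rel_of_patternOf_eq hp.symm
      (Nat.mod_lt (i + 1) hmpos) (Nat.mod_lt (j + 1) hmpos) hh
    convert h2 using 2 <;> rw [hlen]

lemma patternOf_rotate {l : List α} {m : List β}
    (hp : patternOf l = patternOf m) (k : ℕ) :
    patternOf (l.rotate k) = patternOf (m.rotate k) := by
  induction k with
  | zero => simpa using hp
  | succ k ih =>
    have : ∀ (L : List α), L.rotate (k + 1) = (L.rotate k).rotate 1 := by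
      intro L; rw [List.rotate_rotate]
    rw [show l.rotate (k+1) = (l.rotate k).rotate 1 by rw [List.rotate_rotate],
        show m.rotate (k+1) = (m.rotate k).rotate 1 by rw [List.rotate_rotate]]
    exact patternOf_rotate_one ih

lemma patternOf_rotate_one_iff (l : List α) (m : List β) :
    patternOf (l.rotate 1) = patternOf (m.rotate 1) ↔ patternOf l = patternOf m := by
  constructor
  · intro h
    have hlen : l.length = m.length := by
      have := length_eq_of_patternOf_eq h
      simpa using this
    rcases Nat.eq_zero_or_pos l.length with h0 | h0
    · have hl : l = [] := List.length_eq_zero_iff.1 h0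
      have hm : m = [] := List.length_eq_zero_iff.1 (by omega)
      subst hl hm; rfl
    · have := patternOf_rotate h (l.length - 1)
      rw [List.rotate_rotate, List.rotate_rotate] at this
      have e1 : 1 + (l.length - 1) = l.length := by omega
      rw [e1, List.rotate_length, show m.rotate l.length = m by
        rw [hlen, List.rotate_length]] at this
      exact this
  · exact patternOf_rotate_one

lemma neg_one_pow_mod_even {L : ℕ} (hL : Even L) (m : ℕ) :
    ((-1 : ℤ)) ^ (m % L) = (-1) ^ m := by
  conv_rhs => rw [← Nat.div_add_mod m L]
  rw [pow_add, pow_mul, hL.neg_one_pow, one_pow, one_mul]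

end Aux

/-- For a Gauss word `v` of length `2n`, the alternating sum
`Σ_{k=0}^{2n-1} (-1)^k ⟨rotᵏ v, w⟩` is unchanged when the nanoword `w` is replaced
by its image under the base point move (rotate one step, negate the sign of the
first letter). -/
theorem alternating_rotation_sum_base_point_invariant {α : Type*} [DecidableEq α]
    (n : ℕ) (v : List ℕ) (hvGauss : ∀ c ∈ v, v.count c = 2) (hvlen : v.length = 2 * n)
    (a : α) (x : List α) (sgn : α → ℤ)
    (hGauss : ∀ c ∈ a :: x, (a :: x).count c = 2)
    (hsgn : ∀ c, sgn c = 1 ∨ sgn c = -1) :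
    ∑ k ∈ Finset.range (2 * n), (-1 : ℤ) ^ k * pair (v.rotate k) (a :: x) sgn =
      ∑ k ∈ Finset.range (2 * n), (-1 : ℤ) ^ k *
        pair (v.rotate k) (x ++ [a]) (Function.update sgn a (-(sgn a))) := by
  have hT : (x ++ [a]).toFinset = (a :: x).toFinset := by
    ext c; simp [or_comm]
  simp only [pair, hT, Finset.mul_sum]
  rw [Finset.sum_comm, Finset.sum_comm (s := Finset.range (2 * n))]
  apply Finset.sum_congr rfl
  intro S _
  by_cases haS : a ∈ S
  · -- the letter `a` lies in `S`
    have hsub1 : subword (a :: x) S = a :: subword x S := by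
      simp [subword, List.filter_cons, haS]
    have hsub2 : subword (x ++ [a]) S = subword x S ++ [a] := by
      simp [subword, List.filter_append, haS]
    have hrot : subword (x ++ [a]) S = (subword (a :: x) S).rotate 1 := by
      rw [hsub1, hsub2]
      rw [show (1 : ℕ) = 0 + 1 from rfl, List.rotate_cons_succ, List.rotate_zero]
    have hprod : ∏ c ∈ S, Function.update sgn a (-(sgn a)) c = -∏ c ∈ S, sgn c := by
      rw [Finset.prod_update_of_mem haS, Finset.prod_eq_mul_prod_sdiff_singleton_of_mem haS sgn]
      ring
    rcases Nat.eq_zero_or_pos (2 * n) with hn | hn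
    · simp [hn]
    have hEven : Even (2 * n) := ⟨n, by ring⟩
    apply Finset.sum_nbij' (i := fun k => (k + 1) % (2 * n))
      (j := fun k => (k + (2 * n - 1)) % (2 * n))
    · intro k hk
      exact Finset.mem_range.2 (Nat.mod_lt _ hn)
    · intro k hk
      exact Finset.mem_range.2 (Nat.mod_lt _ hn)
    · intro k hk
      have hk' := Finset.mem_range.1 hk
      rw [Nat.mod_add_mod, show k + 1 + (2 * n - 1) = k + 2 * n by omega,
        Nat.add_mod_right, Nat.mod_eq_of_lt hk']
    · intro k hk
      have hk' := Finset.mem_range.1 hk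
      rw [Nat.mod_add_mod, show k + (2 * n - 1) + 1 = k + 2 * n by omega,
        Nat.add_mod_right, Nat.mod_eq_of_lt hk']
    · intro k hk
      have hpow : ((-1 : ℤ)) ^ ((k + 1) % (2 * n)) = (-1) ^ (k + 1) :=
        neg_one_pow_mod_even hEven _
      have hvr : v.rotate ((k + 1) % (2 * n)) = (v.rotate k).rotate 1 := by
        rw [← hvlen, List.rotate_mod, List.rotate_rotate]
      rw [hpow, hvr, hrot, hprod]
      by_cases hcond : patternOf (subword (a :: x) S) = patternOf (v.rotate k)
      · rw [if_pos hcond, if_pos (patternOf_rotate_one hcond)]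
        rw [pow_succ]; ring
      · rw [if_neg hcond, if_neg (fun hc => hcond
          ((patternOf_rotate_one_iff _ _).1 hc))]
        simp
  · -- the letter `a` does not lie in `S`
    apply Finset.sum_congr rfl
    intro k _
    have hsub1 : subword (a :: x) S = subword x S := by
      simp [subword, List.filter_cons, haS]
    have hsub2 : subword (x ++ [a]) S = subword x S := by
      simp [subword, List.filter_append, haS]
    have hprod : ∏ c ∈ S, Function.update sgn a (-(sgn a)) c = ∏ c ∈ S, sgn c := by
      apply Finset.prod_congr rfl
      intro c hc
      exact Function.update_of_ne (fun h => haS (by rwa [h] at hc)) _ _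
    rw [hsub1, hsub2, hprod]
end

section
/- For every nanoword w, the two quantities ⟨XYXYZZ, w⟩ − ⟨YXYZZX, w⟩ + ⟨XYZZXY, w⟩ − ⟨YZZXYX, w⟩ + ⟨ZZXYXY, w⟩ − ⟨ZXYXYZ, w⟩ and ⟨XXYYZZ, w⟩ − ⟨XYYZZX, w⟩ are each unchanged when w is replaced by its image under the base point move. (These are the word parts of the invariant CI₃ of plane closed curves.) -/
open Finset

section Helpers
set_option linter.unusedSectionVars false
set_option linter.unusedVariables false
variable {α β : Type*} [DecidableEq α] [DecidableEq β]


lemma indexOf_getElem?_self {l : List α} {a : α} (h : a ∈ l) :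
    l[l.idxOf a]? = some a := by
  induction l with
  | nil => simp at h
  | cons b t ih =>
    by_cases hb : b = a
    · simp [List.idxOf_cons, hb]
    · have ha : a ∈ t := by
        rcases List.mem_cons.mp h with h' | h'
        · exact absurd h'.symm hb
        · exact h'
      simp [List.idxOf_cons, hb, ih ha]

lemma indexOf_le_of_getElem? {l : List α} {a : α} {k : ℕ} (h : l[k]? = some a) :
    l.idxOf a ≤ k := by
  induction l generalizing k with
  | nil => simp at h
  | cons b t ih =>
    by_cases hb : b = a
    · simp [List.idxOf_cons, hb]
    · cases k with
      | zero => simp at h; exact absurd h hb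
      | succ k =>
        simp only [List.getElem?_cons_succ] at h
        have := ih h
        simp [List.idxOf_cons, hb]
        omega

lemma patternOf_eq_iff {l : List α} {m : List β} :
    patternOf l = patternOf m ↔
      l.length = m.length ∧ ∀ (i j : ℕ), (l[i]? = l[j]? ↔ m[i]? = m[j]?) := by
  constructor
  · intro h
    have hlen : l.length = m.length := by
      have := congrArg List.length h
      simpa [patternOf] using this
    refine ⟨hlen, fun i j => ?_⟩
    have key : ∀ (k : ℕ) (ak : α) (bk : β), l[k]? = some ak → m[k]? = some bk →
        l.idxOf ak = m.idxOf bk := by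
      intro k ak bk hak hbk
      have h1 : (patternOf l)[k]? = some (l.idxOf ak) := by
        simp [patternOf, List.getElem?_map, hak]
      have h2 : (patternOf m)[k]? = some (m.idxOf bk) := by
        simp [patternOf, List.getElem?_map, hbk]
      rw [h, h2] at h1; exact (Option.some_inj.mp h1).symm
    by_cases hi : i < l.length
    · by_cases hj : j < l.length
      · obtain ⟨ai, hai⟩ : ∃ y, l[i]? = some y := ⟨_, List.getElem?_eq_getElem hi⟩
        obtain ⟨aj, haj⟩ : ∃ y, l[j]? = some y := ⟨_, List.getElem?_eq_getElem hj⟩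
        obtain ⟨bi, hbi⟩ : ∃ y, m[i]? = some y := ⟨_, List.getElem?_eq_getElem (hlen ▸ hi)⟩
        obtain ⟨bj, hbj⟩ : ∃ y, m[j]? = some y := ⟨_, List.getElem?_eq_getElem (hlen ▸ hj)⟩
        rw [hai, haj, hbi, hbj]
        have hmi : ai ∈ l := List.mem_of_getElem? hai
        have hmj : aj ∈ l := List.mem_of_getElem? haj
        have hmi' : bi ∈ m := List.mem_of_getElem? hbi
        have hmj' : bj ∈ m := List.mem_of_getElem? hbj
        rw [Option.some_inj, Option.some_inj,
          ← List.idxOf_inj (y := aj) hmi, ← List.idxOf_inj (y := bj) hmi',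
          key i ai bi hai hbi, key j aj bj haj hbj]
      · have h1 : l[j]? = none := List.getElem?_eq_none (by omega)
        have h2 : m[j]? = none := List.getElem?_eq_none (by omega)
        obtain ⟨ai, hai⟩ : ∃ y, l[i]? = some y := ⟨_, List.getElem?_eq_getElem hi⟩
        obtain ⟨bi, hbi⟩ : ∃ y, m[i]? = some y := ⟨_, List.getElem?_eq_getElem (hlen ▸ hi)⟩
        simp [h1, h2, hai, hbi]
    · have h1 : l[i]? = none := List.getElem?_eq_none (by omega)
      have h2 : m[i]? = none := List.getElem?_eq_none (by omega)
      have h3 : (l[j]? = none) ↔ (m[j]? = none) := by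
        rw [List.getElem?_eq_none_iff, List.getElem?_eq_none_iff]; omega
      rw [h1, h2]
      constructor
      · intro hj; exact (h3.mp hj.symm).symm
      · intro hj; exact (h3.mpr hj.symm).symm
  · rintro ⟨hlen, hE⟩
    apply List.ext_getElem?
    intro i
    by_cases hi : i < l.length
    · obtain ⟨ai, hai⟩ : ∃ y, l[i]? = some y := ⟨_, List.getElem?_eq_getElem hi⟩
      obtain ⟨bi, hbi⟩ : ∃ y, m[i]? = some y := ⟨_, List.getElem?_eq_getElem (hlen ▸ hi)⟩
      have h1 : (patternOf l)[i]? = some (l.idxOf ai) := by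
        simp [patternOf, List.getElem?_map, hai]
      have h2 : (patternOf m)[i]? = some (m.idxOf bi) := by
        simp [patternOf, List.getElem?_map, hbi]
      rw [h1, h2, Option.some_inj]
      have hmi : ai ∈ l := List.mem_of_getElem? hai
      have hmi' : bi ∈ m := List.mem_of_getElem? hbi
      -- l.idxOf ai ≤ m.idxOf bi and conversely
      have e1 : l[l.idxOf ai]? = l[i]? := by rw [hai]; exact indexOf_getElem?_self hmi
      have e2 : m[m.idxOf bi]? = m[i]? := by rw [hbi]; exact indexOf_getElem?_self hmi'
      have e1' : m[l.idxOf ai]? = m[i]? := (hE _ _).mp e1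
      have e2' : l[m.idxOf bi]? = l[i]? := (hE _ _).mpr e2
      have le1 : m.idxOf bi ≤ l.idxOf ai :=
        indexOf_le_of_getElem? (by rw [e1', hbi])
      have le2 : l.idxOf ai ≤ m.idxOf bi :=
        indexOf_le_of_getElem? (by rw [e2', hai])
      omega
    · have h1 : (patternOf l)[i]? = none := List.getElem?_eq_none (by simp [patternOf]; omega)
      have h2 : (patternOf m)[i]? = none := List.getElem?_eq_none (by simp [patternOf]; omega)
      rw [h1, h2]

lemma getElem?_rot (a : α) (t : List α) (i : ℕ) :
    (t ++ [a])[i]? = (a :: t)[if i = t.length then 0 else i + 1]? := by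
  split_ifs with h
  · subst h
    rw [List.getElem?_append_right le_rfl]
    simp
  · rcases lt_or_gt_of_ne h with h' | h'
    · rw [List.getElem?_append_left h']
      simp
    · rw [List.getElem?_eq_none (by simp; omega), List.getElem?_eq_none (by simp; omega)]

lemma rot_iff (a : α) (t : List α) (b : β) (s : List β) :
    patternOf (a :: t) = patternOf (b :: s) ↔ patternOf (t ++ [a]) = patternOf (s ++ [b]) := by
  rw [patternOf_eq_iff, patternOf_eq_iff]
  simp only [List.length_cons, List.length_append, List.length_nil]
  constructor
  · rintro ⟨h1, h2⟩
    have hlen : s.length = t.length := by omega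
    refine ⟨by omega, fun i j => ?_⟩
    rw [getElem?_rot, getElem?_rot, getElem?_rot, getElem?_rot, hlen]
    exact h2 _ _
  · rintro ⟨h1, h2⟩
    have hlen : s.length = t.length := by omega
    refine ⟨by omega, fun i j => ?_⟩
    by_cases hi : i ≤ t.length
    · by_cases hj : j ≤ t.length
      · have e1 : (a :: t)[i]? = (t ++ [a])[if i = 0 then t.length else i - 1]? := by
          rw [getElem?_rot]; congr 1; split_ifs <;> omega
        have e2 : (a :: t)[j]? = (t ++ [a])[if j = 0 then t.length else j - 1]? := by
          rw [getElem?_rot]; congr 1; split_ifs <;> omega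
        have e3 : (b :: s)[i]? = (s ++ [b])[if i = 0 then t.length else i - 1]? := by
          rw [getElem?_rot]; congr 1; split_ifs <;> omega
        have e4 : (b :: s)[j]? = (s ++ [b])[if j = 0 then t.length else j - 1]? := by
          rw [getElem?_rot]; congr 1; split_ifs <;> omega
        rw [e1, e2, e3, e4]
        exact h2 _ _
      · have e1 : (a :: t)[j]? = none := List.getElem?_eq_none (by simp; omega)
        have e2 : (b :: s)[j]? = none := List.getElem?_eq_none (by simp; omega)
        rw [e1, e2, List.getElem?_eq_none_iff, List.getElem?_eq_none_iff]
        simp; omega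
    · have e1 : (a :: t)[i]? = none := List.getElem?_eq_none (by simp; omega)
      have e2 : (b :: s)[i]? = none := List.getElem?_eq_none (by simp; omega)
      rw [e1, e2]
      rw [eq_comm, List.getElem?_eq_none_iff, eq_comm (a := (none : Option β)),
        List.getElem?_eq_none_iff]
      simp; omega

lemma toFinset_rot (a : α) (x : List α) : (x ++ [a]).toFinset = (a :: x).toFinset := by
  ext c; simp [or_comm]

lemma subword_cons_mem {a : α} {S : Finset α} (x : List α) (h : a ∈ S) :
    subword (a :: x) S = a :: subword x S := by
  simp [subword, List.filter_cons, h]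

lemma subword_cons_not_mem {a : α} {S : Finset α} (x : List α) (h : a ∉ S) :
    subword (a :: x) S = subword x S := by
  simp [subword, List.filter_cons, h]

lemma subword_append_mem {a : α} {S : Finset α} (x : List α) (h : a ∈ S) :
    subword (x ++ [a]) S = subword x S ++ [a] := by
  simp [subword, List.filter_append, h]

lemma subword_append_not_mem {a : α} {S : Finset α} (x : List α) (h : a ∉ S) :
    subword (x ++ [a]) S = subword x S := by
  simp [subword, List.filter_append, h]

lemma prod_update_mem {a : α} {S : Finset α} (sgn : α → ℤ) (h : a ∈ S) :
    ∏ b ∈ S, Function.update sgn a (-(sgn a)) b = -∏ b ∈ S, sgn b := by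
  rw [Finset.prod_update_of_mem h, ← Finset.mul_prod_erase S sgn h,
    Finset.sdiff_singleton_eq_erase]
  ring

lemma prod_update_not_mem {a : α} {S : Finset α} (sgn : α → ℤ) (h : a ∉ S) :
    ∏ b ∈ S, Function.update sgn a (-(sgn a)) b = ∏ b ∈ S, sgn b :=
  Finset.prod_congr rfl fun b hb =>
    Function.update_of_ne (fun hba : b = a => h (hba ▸ hb)) _ _

lemma pair_cons (a : α) (x : List α) (sgn : α → ℤ) (v : List ℕ) :
    pair v (a :: x) sgn =
      (∑ S ∈ ((a :: x).toFinset.powerset.filter (fun S => a ∉ S)),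
        if patternOf (subword x S) = patternOf v then ∏ b ∈ S, sgn b else 0)
      + ∑ S ∈ ((a :: x).toFinset.powerset.filter (fun S => a ∈ S)),
        if patternOf (a :: subword x S) = patternOf v then ∏ b ∈ S, sgn b else 0 := by
  rw [pair, ← Finset.sum_filter_add_sum_filter_not ((a :: x).toFinset.powerset)
    (fun S => a ∉ S)]
  congr 1
  · refine Finset.sum_congr rfl fun S hS => ?_
    rw [Finset.mem_filter] at hS
    rw [subword_cons_not_mem x hS.2]
  · rw [Finset.filter_congr (fun S _ => not_not (a := a ∈ S))]
    refine Finset.sum_congr rfl fun S hS => ?_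
    rw [Finset.mem_filter] at hS
    rw [subword_cons_mem x hS.2]

lemma pair_rot (a : α) (x : List α) (sgn : α → ℤ) (P : List ℕ) (c : ℕ) (s : List ℕ)
    (hP : s ++ [c] = P) (v : List ℕ) (hv : patternOf (c :: s) = patternOf v) :
    pair P (x ++ [a]) (Function.update sgn a (-(sgn a))) =
      (∑ S ∈ ((a :: x).toFinset.powerset.filter (fun S => a ∉ S)),
        if patternOf (subword x S) = patternOf P then ∏ b ∈ S, sgn b else 0)
      - ∑ S ∈ ((a :: x).toFinset.powerset.filter (fun S => a ∈ S)),
        if patternOf (a :: subword x S) = patternOf v then ∏ b ∈ S, sgn b else 0 := by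
  rw [pair, toFinset_rot, ← Finset.sum_filter_add_sum_filter_not ((a :: x).toFinset.powerset)
    (fun S => a ∉ S), sub_eq_add_neg]
  congr 1
  · refine Finset.sum_congr rfl fun S hS => ?_
    rw [Finset.mem_filter] at hS
    rw [subword_append_not_mem x hS.2, prod_update_not_mem sgn hS.2]
  · rw [Finset.filter_congr (fun S _ => not_not (a := a ∈ S)), ← Finset.sum_neg_distrib]
    refine Finset.sum_congr rfl fun S hS => ?_
    rw [Finset.mem_filter] at hS
    have hcond : (patternOf (subword (x ++ [a]) S) = patternOf P)
        = (patternOf (a :: subword x S) = patternOf v) := by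
      rw [subword_append_mem x hS.2, ← hP, ← rot_iff, hv]
    simp only [hcond, prod_update_mem sgn hS.2]
    split_ifs <;> simp

end Helpers

/-- the word parts
`⟨XYXYZZ,w⟩ − ⟨YXYZZX,w⟩ + ⟨XYZZXY,w⟩ − ⟨YZZXYX,w⟩ + ⟨ZZXYXY,w⟩ − ⟨ZXYXYZ,w⟩`
and `⟨XXYYZZ,w⟩ − ⟨XYYZZX,w⟩` of the invariant `CI₃` are unchanged under the
base point move. -/
theorem CI3_word_parts_base_point_invariant {α : Type*} [DecidableEq α]
    (a : α) (x : List α) (sgn : α → ℤ)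
    (hGauss : ∀ c ∈ a :: x, (a :: x).count c = 2)
    (hsgn : ∀ c, sgn c = 1 ∨ sgn c = -1) :
    (pair [0,1,0,1,2,2] (a :: x) sgn - pair [1,0,1,2,2,0] (a :: x) sgn
        + pair [0,1,2,2,0,1] (a :: x) sgn - pair [1,2,2,0,1,0] (a :: x) sgn
        + pair [2,2,0,1,0,1] (a :: x) sgn - pair [2,0,1,0,1,2] (a :: x) sgn =
      pair [0,1,0,1,2,2] (x ++ [a]) (Function.update sgn a (-(sgn a)))
        - pair [1,0,1,2,2,0] (x ++ [a]) (Function.update sgn a (-(sgn a)))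
        + pair [0,1,2,2,0,1] (x ++ [a]) (Function.update sgn a (-(sgn a)))
        - pair [1,2,2,0,1,0] (x ++ [a]) (Function.update sgn a (-(sgn a)))
        + pair [2,2,0,1,0,1] (x ++ [a]) (Function.update sgn a (-(sgn a)))
        - pair [2,0,1,0,1,2] (x ++ [a]) (Function.update sgn a (-(sgn a)))) ∧
    (pair [0,0,1,1,2,2] (a :: x) sgn - pair [0,1,1,2,2,0] (a :: x) sgn =
      pair [0,0,1,1,2,2] (x ++ [a]) (Function.update sgn a (-(sgn a)))
        - pair [0,1,1,2,2,0] (x ++ [a]) (Function.update sgn a (-(sgn a)))) := by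
  constructor
  · rw [pair_cons a x sgn [0,1,0,1,2,2], pair_cons a x sgn [1,0,1,2,2,0],
      pair_cons a x sgn [0,1,2,2,0,1], pair_cons a x sgn [1,2,2,0,1,0],
      pair_cons a x sgn [2,2,0,1,0,1], pair_cons a x sgn [2,0,1,0,1,2],
      pair_rot a x sgn [0,1,0,1,2,2] 2 [0,1,0,1,2] rfl [2,0,1,0,1,2] rfl,
      pair_rot a x sgn [1,0,1,2,2,0] 0 [1,0,1,2,2] rfl [0,1,0,1,2,2] rfl,
      pair_rot a x sgn [0,1,2,2,0,1] 1 [0,1,2,2,0] rfl [1,0,1,2,2,0] rfl,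
      pair_rot a x sgn [1,2,2,0,1,0] 0 [1,2,2,0,1] rfl [0,1,2,2,0,1] rfl,
      pair_rot a x sgn [2,2,0,1,0,1] 1 [2,2,0,1,0] rfl [1,2,2,0,1,0] rfl,
      pair_rot a x sgn [2,0,1,0,1,2] 2 [2,0,1,0,1] rfl [2,2,0,1,0,1] rfl]
    ring
  · rw [pair_cons a x sgn [0,0,1,1,2,2], pair_cons a x sgn [0,1,1,2,2,0],
      pair_rot a x sgn [0,0,1,1,2,2] 2 [0,0,1,1,2] rfl [0,1,1,2,2,0] (by decide),
      pair_rot a x sgn [0,1,1,2,2,0] 0 [0,1,1,2,2] rfl [0,0,1,1,2,2] rfl]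
    ring
end

section
/- Let w' be obtained from a nanoword w by the positive elementary move II⁺, i.e. w = xyz and w' = xAByABz where A, B are two new letters with sgn(B) = −sgn(A). Then ⟨XXYY, w'⟩ = ⟨XXYY, w⟩, ⟨XYYX, w'⟩ = ⟨XYYX, w⟩, and ⟨XYXY, w'⟩ = ⟨XYXY, w⟩ − 1; moreover the number of letters increases by 2 and the total sign sum Σ_a sgn(a) is unchanged. -/
open Finset

lemma indexOf_map_inj {α β : Type*} [DecidableEq α] [DecidableEq β]
    {f : α → β} (hf : Function.Injective f) (a : α) (l : List α) :
    (l.map f).idxOf (f a) = l.idxOf a := by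
  induction l with
  | nil => rfl
  | cons b t ih =>
    by_cases h : b = a
    · subst h; simp [List.idxOf_cons_self]
    · rw [List.map_cons, List.idxOf_cons_ne _ (fun hc => h (hf hc)),
        List.idxOf_cons_ne _ h, ih]

lemma patternOf_map {α β : Type*} [DecidableEq α] [DecidableEq β]
    {f : α → β} (hf : Function.Injective f) (l : List α) :
    patternOf (l.map f) = patternOf l := by
  unfold patternOf
  rw [List.map_map]
  congr 1
  funext a
  exact indexOf_map_inj hf a l

lemma patternOf_length {α : Type*} [DecidableEq α] (l : List α) :
    (patternOf l).length = l.length := List.length_map _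

lemma subword_insert_not_mem {α : Type*} [DecidableEq α] {l : List α} {c : α}
    (hc : c ∉ l) (S : Finset α) :
    subword l (insert c S) = subword l S := by
  apply List.filter_congr
  intro a ha
  have : a ≠ c := fun h => hc (h ▸ ha)
  simp [Finset.mem_insert, this]

lemma subword_split {α : Type*} [DecidableEq α] (x y z : List α) (A B : α) (S : Finset α) :
    subword (x ++ [A, B] ++ y ++ [A, B] ++ z) S
      = subword x S ++ subword [A, B] S ++ subword y S ++ subword [A, B] S ++ subword z S := by
  simp only [subword, List.filter_append]

lemma pair_II {α : Type*} [DecidableEq α]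
    (x y z : List α) (A B : α) (sgn : α → ℤ)
    (hsgn : ∀ c, sgn c = 1 ∨ sgn c = -1)
    (hA : A ∉ x ++ y ++ z) (hB : B ∉ x ++ y ++ z) (hAB : A ≠ B)
    (hopp : sgn B = -sgn A) (v : List ℕ) (hv : v.length = 4) :
    pair v (x ++ [A, B] ++ y ++ [A, B] ++ z) sgn
      = pair v (x ++ y ++ z) sgn
        + (if ([0,1,0,1] : List ℕ) = patternOf v then -1 else 0) := by
  have hAx : A ∉ x := fun h => hA (by simp [h])
  have hAy : A ∉ y := fun h => hA (by simp [h])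
  have hAz : A ∉ z := fun h => hA (by simp [h])
  have hBx : B ∉ x := fun h => hB (by simp [h])
  have hBy : B ∉ y := fun h => hB (by simp [h])
  have hBz : B ∉ z := fun h => hB (by simp [h])
  set w : List α := x ++ y ++ z with hw
  set W : List α := x ++ [A, B] ++ y ++ [A, B] ++ z with hW
  have hWt : W.toFinset = insert A (insert B w.toFinset) := by
    ext c
    simp [hW, hw, List.mem_toFinset]
    try tauto
  have hBnot : B ∉ w.toFinset := by simpa [List.mem_toFinset] using hB
  have hAnot : A ∉ insert B w.toFinset := by
    simp only [Finset.mem_insert, List.mem_toFinset, not_or]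
    exact ⟨hAB, hA⟩
  set f : Finset α → ℤ := fun S =>
    if patternOf (subword W S) = patternOf v then ∏ a ∈ S, sgn a else 0 with hf
  have expand : pair v W sgn
      = ∑ S ∈ w.toFinset.powerset, f S
        + ∑ S ∈ w.toFinset.powerset, f (insert B S)
        + (∑ S ∈ w.toFinset.powerset, f (insert A S)
        + ∑ S ∈ w.toFinset.powerset, f (insert A (insert B S))) := by
    rw [pair, hWt, Finset.sum_powerset_insert hAnot,
      Finset.sum_powerset_insert hBnot, Finset.sum_powerset_insert hBnot]
  have hmem : ∀ S ∈ w.toFinset.powerset, (A ∉ S ∧ B ∉ S ∧ ∀ c ∈ S, c ∈ w) := by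
    intro S hS
    rw [Finset.mem_powerset] at hS
    refine ⟨fun h => hA (List.mem_toFinset.1 (hS h)),
      fun h => hB (List.mem_toFinset.1 (hS h)),
      fun c hc => List.mem_toFinset.1 (hS hc)⟩
  -- subword computations for pieces
  have subAB_A : ∀ S : Finset α, B ∉ S → subword [A, B] (insert A S) = [A] := by
    intro S hBS
    simp [subword, Finset.mem_insert, Ne.symm hAB, hBS]
  have subAB_B : ∀ S : Finset α, A ∉ S → subword [A, B] (insert B S) = [B] := by
    intro S hAS
    simp [subword, Finset.mem_insert, hAB, hAS]
  have subAB_AB : ∀ S : Finset α, subword [A, B] (insert A (insert B S)) = [A, B] := by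
    intro S
    simp [subword]
  -- term 1
  have t1 : ∀ S ∈ w.toFinset.powerset, f S
      = (if patternOf (subword w S) = patternOf v then ∏ a ∈ S, sgn a else 0) := by
    intro S hS
    obtain ⟨hAS, hBS, -⟩ := hmem S hS
    have hABS : subword [A, B] S = [] := by simp [subword, hAS, hBS]
    have : subword W S = subword w S := by
      rw [hW, subword_split, hABS]
      simp [subword, hw, List.filter_append]
    simp only [hf, this]
  -- terms 2+3 cancel
  have t23 : ∀ S ∈ w.toFinset.powerset, f (insert A S) + f (insert B S) = 0 := by
    intro S hS
    obtain ⟨hAS, hBS, -⟩ := hmem S hS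
    have hsubA : subword W (insert A S)
        = subword x S ++ [A] ++ subword y S ++ [A] ++ subword z S := by
      rw [hW, subword_split, subAB_A S hBS, subword_insert_not_mem hAx,
        subword_insert_not_mem hAy, subword_insert_not_mem hAz]
    have hsubB : subword W (insert B S)
        = subword x S ++ [B] ++ subword y S ++ [B] ++ subword z S := by
      rw [hW, subword_split, subAB_B S hAS, subword_insert_not_mem hBx,
        subword_insert_not_mem hBy, subword_insert_not_mem hBz]
    have hfix : ∀ l : List α, A ∉ l → B ∉ l → l.map (Equiv.swap A B) = l := by
      intro l h1 h2
      have := List.map_congr_left (l := l) (f := (Equiv.swap A B : α → α)) (g := id)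
        (fun a ha => Equiv.swap_apply_of_ne_of_ne (fun h => h1 (h ▸ ha)) (fun h => h2 (h ▸ ha)))
      simpa using this
    have hnx : A ∉ subword x S ∧ B ∉ subword x S :=
      ⟨fun h => hAx (List.mem_of_mem_filter h), fun h => hBx (List.mem_of_mem_filter h)⟩
    have hny : A ∉ subword y S ∧ B ∉ subword y S :=
      ⟨fun h => hAy (List.mem_of_mem_filter h), fun h => hBy (List.mem_of_mem_filter h)⟩
    have hnz : A ∉ subword z S ∧ B ∉ subword z S :=
      ⟨fun h => hAz (List.mem_of_mem_filter h), fun h => hBz (List.mem_of_mem_filter h)⟩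
    have hmap : (subword x S ++ [A] ++ subword y S ++ [A] ++ subword z S).map (Equiv.swap A B)
        = subword x S ++ [B] ++ subword y S ++ [B] ++ subword z S := by
      simp only [List.map_append, hfix _ hnx.1 hnx.2, hfix _ hny.1 hny.2, hfix _ hnz.1 hnz.2,
        List.map_cons, List.map_nil, Equiv.swap_apply_left]
    have hpat : patternOf (subword W (insert A S)) = patternOf (subword W (insert B S)) := by
      rw [hsubA, hsubB, ← hmap, patternOf_map (Equiv.injective _)]
    simp only [hf, hpat]
    by_cases hc : patternOf (subword W (insert B S)) = patternOf v
    · rw [if_pos hc, if_pos hc, Finset.prod_insert hAS, Finset.prod_insert hBS, hopp]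
      ring
    · rw [if_neg hc, if_neg hc, add_zero]
  -- term 4
  have t4 : ∀ S ∈ w.toFinset.powerset, f (insert A (insert B S))
      = if S = ∅ then (if ([0,1,0,1] : List ℕ) = patternOf v then -1 else 0) else 0 := by
    intro S hS
    obtain ⟨hAS, hBS, hcw⟩ := hmem S hS
    have hsub : subword W (insert A (insert B S))
        = subword x S ++ [A, B] ++ subword y S ++ [A, B] ++ subword z S := by
      rw [hW, subword_split, subAB_AB S, subword_insert_not_mem hAx,
        subword_insert_not_mem hAy, subword_insert_not_mem hAz,
        subword_insert_not_mem hBx, subword_insert_not_mem hBy,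
        subword_insert_not_mem hBz]
    by_cases hSe : S = ∅
    · subst hSe
      have hnil : ∀ l : List α, subword l (∅ : Finset α) = [] := by
        intro l; simp [subword]
      have hsub4 : subword W (insert A (insert B (∅ : Finset α))) = [A, B, A, B] := by
        rw [hsub, hnil, hnil, hnil]; rfl
      have h1 : List.idxOf A [A, B, A, B] = 0 := List.idxOf_cons_self
      have h2 : List.idxOf B [A, B, A, B] = 1 := by
        rw [List.idxOf_cons_ne _ hAB]
        simp [List.idxOf_cons_self]
      have hpatABAB : patternOf [A, B, A, B] = [0, 1, 0, 1] := by
        simp [patternOf, h1, h2]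
      have hprod : ∏ a ∈ insert A (insert B (∅ : Finset α)), sgn a = -1 := by
        rw [Finset.prod_insert (by simp [hAB]), Finset.prod_insert (by simp),
          Finset.prod_empty, hopp]
        rcases hsgn A with h | h <;> rw [h] <;> norm_num
      simp only [hf, hsub4, hpatABAB, hprod]
      simp
    · rw [if_neg hSe]
      obtain ⟨c, hc⟩ := Finset.nonempty_iff_ne_empty.2 hSe
      have hcw' : c ∈ x ++ y ++ z := hcw c hc
      have hcmem : c ∈ subword x S ++ subword y S ++ subword z S := by
        simp only [subword, List.mem_append, List.mem_filter, decide_eq_true_eq] at hcw' ⊢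
        tauto
      have hlen : 4 < (subword W (insert A (insert B S))).length := by
        rw [hsub]
        have : 0 < (subword x S ++ subword y S ++ subword z S).length :=
          List.length_pos_iff.2 (List.ne_nil_of_mem hcmem)
        simp only [List.length_append, List.length_cons, List.length_nil] at this ⊢
        omega
      rw [hf]
      simp only
      rw [if_neg]
      intro h
      have := congrArg List.length h
      rw [patternOf_length, patternOf_length, hv] at this
      omega
  -- assemble
  have e1 : ∑ S ∈ w.toFinset.powerset, f S = pair v w sgn := by
    rw [pair]; exact Finset.sum_congr rfl t1
  have e23 : ∑ S ∈ w.toFinset.powerset, f (insert A S)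
      + ∑ S ∈ w.toFinset.powerset, f (insert B S) = 0 := by
    rw [← Finset.sum_add_distrib]
    exact Finset.sum_eq_zero t23
  have e4 : ∑ S ∈ w.toFinset.powerset, f (insert A (insert B S))
      = if ([0,1,0,1] : List ℕ) = patternOf v then -1 else 0 := by
    rw [Finset.sum_congr rfl t4, Finset.sum_ite_eq' w.toFinset.powerset ∅
      (fun _ => if ([0,1,0,1] : List ℕ) = patternOf v then -1 else 0),
      if_pos (Finset.empty_mem_powerset _)]
  rw [expand, e1]
  linarith [e23, e4]

/-- effect of the positive elementary move II⁺, `xyz ↦ xAByABz` with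
`A, B` new letters of opposite signs: `⟨XXYY⟩` and `⟨XYYX⟩` are unchanged,
`⟨XYXY⟩` decreases by 1, the number of letters increases by 2, and the total sign
sum is unchanged. -/
theorem move_II_plus_effect {α : Type*} [DecidableEq α]
    (x y z : List α) (A B : α) (sgn : α → ℤ)
    (hGauss : ∀ c ∈ x ++ y ++ z, (x ++ y ++ z).count c = 2)
    (hsgn : ∀ c, sgn c = 1 ∨ sgn c = -1)
    (hA : A ∉ x ++ y ++ z) (hB : B ∉ x ++ y ++ z) (hAB : A ≠ B)
    (hopp : sgn B = -sgn A) :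
    pair [0,0,1,1] (x ++ [A, B] ++ y ++ [A, B] ++ z) sgn
        = pair [0,0,1,1] (x ++ y ++ z) sgn ∧
    pair [0,1,1,0] (x ++ [A, B] ++ y ++ [A, B] ++ z) sgn
        = pair [0,1,1,0] (x ++ y ++ z) sgn ∧
    pair [0,1,0,1] (x ++ [A, B] ++ y ++ [A, B] ++ z) sgn
        = pair [0,1,0,1] (x ++ y ++ z) sgn - 1 ∧
    (x ++ [A, B] ++ y ++ [A, B] ++ z).toFinset.card
        = (x ++ y ++ z).toFinset.card + 2 ∧
    ∑ c ∈ (x ++ [A, B] ++ y ++ [A, B] ++ z).toFinset, sgn c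
        = ∑ c ∈ (x ++ y ++ z).toFinset, sgn c := by

  have hWt : (x ++ [A, B] ++ y ++ [A, B] ++ z).toFinset
      = insert A (insert B (x ++ y ++ z).toFinset) := by
    ext c
    simp [List.mem_toFinset]
    try tauto
  have hBnot : B ∉ (x ++ y ++ z).toFinset := by simpa [List.mem_toFinset] using hB
  have hAnot : A ∉ insert B (x ++ y ++ z).toFinset := by
    simp only [Finset.mem_insert, List.mem_toFinset]
    push_neg
    exact ⟨hAB, hA⟩
  refine ⟨?_, ?_, ?_, ?_, ?_⟩
  · rw [pair_II x y z A B sgn hsgn hA hB hAB hopp _ (by rfl)]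
    rw [if_neg (by decide), add_zero]
  · rw [pair_II x y z A B sgn hsgn hA hB hAB hopp _ (by rfl)]
    rw [if_neg (by decide), add_zero]
  · rw [pair_II x y z A B sgn hsgn hA hB hAB hopp _ (by rfl)]
    rw [if_pos (by decide)]
    try ring
  · rw [hWt, Finset.card_insert_of_notMem hAnot, Finset.card_insert_of_notMem hBnot]
  · rw [hWt, Finset.sum_insert hAnot, Finset.sum_insert hBnot, hopp]
    try ring
end

section
/- Let w' be obtained from a nanoword w by the elementary move III, i.e. w = xAByACzBCt and w' = xBAyCAzCBt where A, B, C are letters with sgn(A) = sgn(B) = sgn(C). Then ⟨XXYY, w'⟩ = ⟨XXYY, w⟩ − 1, ⟨XYYX, w'⟩ = ⟨XYYX, w⟩ + 2, and ⟨XYXY, w'⟩ = ⟨XYXY, w⟩ − 1; moreover the number of letters and the total sign sum Σ_a sgn(a) are unchanged. -/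
open Finset

lemma lenFilter {α : Type*} [DecidableEq α] (w : List α) (S : Finset α) :
    (w.filter (fun a => decide (a ∈ S))).length = ∑ a ∈ S, w.count a := by
  induction w with
  | nil => simp
  | cons c w ih =>
    by_cases hc : c ∈ S <;>
      simp [List.filter_cons, hc, ih, List.count_cons, Finset.sum_add_distrib,
        Finset.sum_ite_eq' S c]

lemma filterSwap {α : Type*} (p : α → Bool) (A B : α) (h : ¬(p A = true ∧ p B = true)) :
    [B,A].filter p = [A,B].filter p := by
  cases hA : p A <;> cases hB : p B <;> simp_all [List.filter]

lemma filterNil {α : Type*} [DecidableEq α] (l : List α) (S : Finset α)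
    (h : ∀ a ∈ S, a ∉ l) : l.filter (fun a => decide (a ∈ S)) = [] := by
  rw [List.filter_eq_nil_iff]
  intro a ha
  simp only [decide_eq_true_eq]
  exact fun haS => h a haS ha

lemma key_move {α : Type*} [DecidableEq α]
    (x y z t : List α) (A B C : α) (sgn : α → ℤ)
    (hGauss : ∀ c ∈ x ++ [A, B] ++ y ++ [A, C] ++ z ++ [B, C] ++ t,
      (x ++ [A, B] ++ y ++ [A, C] ++ z ++ [B, C] ++ t).count c = 2)
    (hAB : A ≠ B) (hAC : A ≠ C) (hBC : B ≠ C)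
    (v : List ℕ) (hv : v.length = 4) :
    pair v (x ++ [B, A] ++ y ++ [C, A] ++ z ++ [C, B] ++ t) sgn
      - pair v (x ++ [A, B] ++ y ++ [A, C] ++ z ++ [B, C] ++ t) sgn
    = ((if patternOf ([B,A,A,B] : List α) = patternOf v then sgn A * sgn B else 0)
        - (if patternOf ([A,B,A,B] : List α) = patternOf v then sgn A * sgn B else 0))
      + ((if patternOf ([A,C,A,C] : List α) = patternOf v then sgn A * sgn C else 0)
        - (if patternOf ([A,A,C,C] : List α) = patternOf v then sgn A * sgn C else 0))
      + ((if patternOf ([B,C,C,B] : List α) = patternOf v then sgn B * sgn C else 0)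
        - (if patternOf ([B,C,B,C] : List α) = patternOf v then sgn B * sgn C else 0)) := by
  set w : List α := x ++ [A, B] ++ y ++ [A, C] ++ z ++ [B, C] ++ t with hw
  set w' : List α := x ++ [B, A] ++ y ++ [C, A] ++ z ++ [C, B] ++ t with hw'
  have hperm : w'.Perm w := by
    rw [List.perm_iff_count]
    intro a
    simp [hw, hw', List.count_append, List.count_cons]
    ring
  have hF : w'.toFinset = w.toFinset := List.toFinset_eq_of_perm _ _ hperm
  -- the three special letters do not occur in x, y, z, t
  have hnm : ∀ D : α, D ∈ ({A,B,C} : Finset α) → D ∉ x ∧ D ∉ y ∧ D ∉ z ∧ D ∉ t := by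
    intro D hD
    have hcnt := hGauss D (by
      simp only [Finset.mem_insert, Finset.mem_singleton] at hD
      rcases hD with rfl | rfl | rfl <;> simp [hw])
    simp only [Finset.mem_insert, Finset.mem_singleton] at hD
    rcases hD with rfl | rfl | rfl <;>
    · simp only [hw, List.count_append, List.count_cons, List.count_nil] at hcnt
      simp [hAB, hAC, hBC, hAB.symm, hAC.symm, hBC.symm] at hcnt
      refine ⟨List.count_eq_zero.mp ?_, List.count_eq_zero.mp ?_,
        List.count_eq_zero.mp ?_, List.count_eq_zero.mp ?_⟩ <;> omega
  obtain ⟨hAx, hAy, hAz, hAt⟩ := hnm A (by simp)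
  obtain ⟨hBx, hBy, hBz, hBt⟩ := hnm B (by simp)
  obtain ⟨hCx, hCy, hCz, hCt⟩ := hnm C (by simp)
  have hnil : ∀ l : List α, A ∉ l → B ∉ l → C ∉ l → ∀ S : Finset α, S ⊆ {A,B,C} →
      l.filter (fun a => decide (a ∈ S)) = [] := by
    intro l h1 h2 h3 S hS
    apply filterNil
    intro a ha
    have := hS ha
    simp only [Finset.mem_insert, Finset.mem_singleton] at this
    rcases this with rfl | rfl | rfl <;> assumption
  have hsubAB : ({A,B} : Finset α) ⊆ {A,B,C} := by intro c hc; simp at hc ⊢; tauto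
  have hsubAC : ({A,C} : Finset α) ⊆ {A,B,C} := by intro c hc; simp at hc ⊢; tauto
  have hsubBC : ({B,C} : Finset α) ⊆ {A,B,C} := by intro c hc; simp at hc ⊢; tauto
  -- subword computations
  have e1 : subword w' {A,B} = [B,A,A,B] := by
    simp only [hw', subword, List.filter_append]
    rw [hnil x hAx hBx hCx _ hsubAB, hnil y hAy hBy hCy _ hsubAB,
      hnil z hAz hBz hCz _ hsubAB, hnil t hAt hBt hCt _ hsubAB]
    simp [List.filter_cons, hAC.symm, hBC.symm]
  have e2 : subword w {A,B} = [A,B,A,B] := by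
    simp only [hw, subword, List.filter_append]
    rw [hnil x hAx hBx hCx _ hsubAB, hnil y hAy hBy hCy _ hsubAB,
      hnil z hAz hBz hCz _ hsubAB, hnil t hAt hBt hCt _ hsubAB]
    simp [List.filter_cons, hAC.symm, hBC.symm]
  have e3 : subword w' {A,C} = [A,C,A,C] := by
    simp only [hw', subword, List.filter_append]
    rw [hnil x hAx hBx hCx _ hsubAC, hnil y hAy hBy hCy _ hsubAC,
      hnil z hAz hBz hCz _ hsubAC, hnil t hAt hBt hCt _ hsubAC]
    simp [List.filter_cons, hAB.symm, hBC]
  have e4 : subword w {A,C} = [A,A,C,C] := by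
    simp only [hw, subword, List.filter_append]
    rw [hnil x hAx hBx hCx _ hsubAC, hnil y hAy hBy hCy _ hsubAC,
      hnil z hAz hBz hCz _ hsubAC, hnil t hAt hBt hCt _ hsubAC]
    simp [List.filter_cons, hAB.symm, hBC]
  have e5 : subword w' {B,C} = [B,C,C,B] := by
    simp only [hw', subword, List.filter_append]
    rw [hnil x hAx hBx hCx _ hsubBC, hnil y hAy hBy hCy _ hsubBC,
      hnil z hAz hBz hCz _ hsubBC, hnil t hAt hBt hCt _ hsubBC]
    simp [List.filter_cons, hAB, hAC]
  have e6 : subword w {B,C} = [B,C,B,C] := by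
    simp only [hw, subword, List.filter_append]
    rw [hnil x hAx hBx hCx _ hsubBC, hnil y hAy hBy hCy _ hsubBC,
      hnil z hAz hBz hCz _ hsubBC, hnil t hAt hBt hCt _ hsubBC]
    simp [List.filter_cons, hAB, hAC]
  -- the three special subsets
  set T : Finset (Finset α) := {{A,B},{A,C},{B,C}} with hT
  have hABmem : A ∈ w.toFinset := by simp [hw]
  have hBmem : B ∈ w.toFinset := by simp [hw]
  have hCmem : C ∈ w.toFinset := by simp [hw]
  have hTsub : T ⊆ w.toFinset.powerset := by
    intro S hS
    simp only [hT, Finset.mem_insert, Finset.mem_singleton] at hS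
    rw [Finset.mem_powerset]
    rcases hS with rfl | rfl | rfl <;> intro c hc <;> simp at hc <;>
      rcases hc with rfl | rfl <;> assumption
  have hvan : ∀ S ∈ w.toFinset.powerset, S ∉ T →
      ((if patternOf (subword w' S) = patternOf v then ∏ a ∈ S, sgn a else 0)
        - (if patternOf (subword w S) = patternOf v then ∏ a ∈ S, sgn a else 0)) = 0 := by
    intro S hSp hST
    have hsub : S ⊆ w.toFinset := Finset.mem_powerset.mp hSp
    have hcnt : ∀ a ∈ S, w.count a = 2 := fun a ha =>
      hGauss a (List.mem_toFinset.mp (hsub ha))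
    have hlw : (subword w S).length = 2 * S.card := by
      rw [subword, lenFilter, Finset.sum_congr rfl hcnt]
      simp [mul_comm]
    have hlw' : (subword w' S).length = 2 * S.card := by
      rw [subword, lenFilter,
        Finset.sum_congr rfl (fun a ha => (hperm.count_eq a).trans (hcnt a ha))]
      simp [mul_comm]
    by_cases h2 : S.card = 2
    · obtain ⟨a, b, hab, rfl⟩ := Finset.card_eq_two.mp h2
      have hpair : ∀ P Q : α, P ≠ Q → ({P,Q} : Finset α) ∈ T →
          ¬(P ∈ ({a,b} : Finset α) ∧ Q ∈ ({a,b} : Finset α)) := by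
        rintro P Q hPQ hmemT ⟨h1', h2'⟩
        apply hST
        have hsub2 : ({P,Q} : Finset α) ⊆ {a,b} := by
          intro c hc; simp at hc; rcases hc with rfl | rfl <;> assumption
        have heq : ({P,Q} : Finset α) = {a,b} :=
          Finset.eq_of_subset_of_card_le hsub2
            (by rw [Finset.card_pair hPQ, Finset.card_pair hab])
        rw [← heq]
        exact hmemT
      have hswap : subword w' {a,b} = subword w {a,b} := by
        simp only [hw, hw', subword, List.filter_append]
        rw [filterSwap _ A B (by simpa using hpair A B hAB (by simp [hT])),
          filterSwap _ A C (by simpa using hpair A C hAC (by simp [hT])),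
          filterSwap _ B C (by simpa using hpair B C hBC (by simp [hT]))]
      rw [hswap, sub_self]
    · have g1 : patternOf (subword w S) ≠ patternOf v := by
        intro h
        apply h2
        have hl := congrArg List.length h
        simp only [patternOf, List.length_map] at hl
        rw [hlw, hv] at hl
        omega
      have g2 : patternOf (subword w' S) ≠ patternOf v := by
        intro h
        apply h2
        have hl := congrArg List.length h
        simp only [patternOf, List.length_map] at hl
        rw [hlw', hv] at hl
        omega
      rw [if_neg g1, if_neg g2, sub_self]
  have hne1 : ({A,B} : Finset α) ≠ {A,C} := by
    intro h
    have : C ∈ ({A,B} : Finset α) := by rw [h]; simp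
    simp at this
    rcases this with h' | h' <;> [exact hAC h'.symm; exact hBC h'.symm]
  have hne2 : ({A,B} : Finset α) ≠ {B,C} := by
    intro h
    have : C ∈ ({A,B} : Finset α) := by rw [h]; simp
    simp at this
    rcases this with h' | h' <;> [exact hAC h'.symm; exact hBC h'.symm]
  have hne3 : ({A,C} : Finset α) ≠ {B,C} := by
    intro h
    have : B ∈ ({A,C} : Finset α) := by rw [h]; simp
    simp at this
    rcases this with h' | h' <;> [exact hAB h'.symm; exact hBC h']
  calc pair v w' sgn - pair v w sgn
      = ∑ S ∈ w.toFinset.powerset,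
          ((if patternOf (subword w' S) = patternOf v then ∏ a ∈ S, sgn a else 0)
            - (if patternOf (subword w S) = patternOf v then ∏ a ∈ S, sgn a else 0)) := by
        rw [Finset.sum_sub_distrib]
        unfold pair
        rw [hF]
    _ = ∑ S ∈ T,
          ((if patternOf (subword w' S) = patternOf v then ∏ a ∈ S, sgn a else 0)
            - (if patternOf (subword w S) = patternOf v then ∏ a ∈ S, sgn a else 0)) :=
        (Finset.sum_subset hTsub (fun S hS hST => hvan S hS hST)).symm
    _ = _ := by
        rw [hT, show ({{A,B},{A,C},{B,C}} : Finset (Finset α))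
            = insert {A,B} (insert {A,C} {{B,C}}) from rfl]
        rw [Finset.sum_insert (by simp [hne1, hne2]),
          Finset.sum_insert (by simp [hne3]), Finset.sum_singleton]
        rw [e1, e2, e3, e4, e5, e6, Finset.prod_pair hAB, Finset.prod_pair hAC,
          Finset.prod_pair hBC]
        ring

/-- effect of the elementary move III, `xAByACzBCt ↦ xBAyCAzCBt` with
`sgn A = sgn B = sgn C`: `⟨XXYY⟩` decreases by 1, `⟨XYYX⟩` increases by 2,
`⟨XYXY⟩` decreases by 1, and the number of letters and the total sign sum are
unchanged. -/
theorem move_III_effect {α : Type*} [DecidableEq α]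
    (x y z t : List α) (A B C : α) (sgn : α → ℤ)
    (hGauss : ∀ c ∈ x ++ [A, B] ++ y ++ [A, C] ++ z ++ [B, C] ++ t,
      (x ++ [A, B] ++ y ++ [A, C] ++ z ++ [B, C] ++ t).count c = 2)
    (hsgn : ∀ c, sgn c = 1 ∨ sgn c = -1)
    (hAB : A ≠ B) (hAC : A ≠ C) (hBC : B ≠ C)
    (hsAB : sgn A = sgn B) (hsBC : sgn B = sgn C) :
    pair [0,0,1,1] (x ++ [B, A] ++ y ++ [C, A] ++ z ++ [C, B] ++ t) sgn
        = pair [0,0,1,1] (x ++ [A, B] ++ y ++ [A, C] ++ z ++ [B, C] ++ t) sgn - 1 ∧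
    pair [0,1,1,0] (x ++ [B, A] ++ y ++ [C, A] ++ z ++ [C, B] ++ t) sgn
        = pair [0,1,1,0] (x ++ [A, B] ++ y ++ [A, C] ++ z ++ [B, C] ++ t) sgn + 2 ∧
    pair [0,1,0,1] (x ++ [B, A] ++ y ++ [C, A] ++ z ++ [C, B] ++ t) sgn
        = pair [0,1,0,1] (x ++ [A, B] ++ y ++ [A, C] ++ z ++ [B, C] ++ t) sgn - 1 ∧
    (x ++ [B, A] ++ y ++ [C, A] ++ z ++ [C, B] ++ t).toFinset.card
        = (x ++ [A, B] ++ y ++ [A, C] ++ z ++ [B, C] ++ t).toFinset.card ∧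
    ∑ c ∈ (x ++ [B, A] ++ y ++ [C, A] ++ z ++ [C, B] ++ t).toFinset, sgn c
        = ∑ c ∈ (x ++ [A, B] ++ y ++ [A, C] ++ z ++ [B, C] ++ t).toFinset, sgn c := by
  have hperm : (x ++ [B, A] ++ y ++ [C, A] ++ z ++ [C, B] ++ t).Perm
      (x ++ [A, B] ++ y ++ [A, C] ++ z ++ [B, C] ++ t) := by
    rw [List.perm_iff_count]
    intro a
    simp [List.count_append, List.count_cons]
    ring
  have hF := List.toFinset_eq_of_perm _ _ hperm
  -- sign products
  have hsACval : sgn A * sgn C = 1 := by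
    rw [hsAB, hsBC]; rcases hsgn C with h | h <;> rw [h] <;> norm_num
  have hsABval : sgn A * sgn B = 1 := by
    rw [hsAB]; rcases hsgn B with h | h <;> rw [h] <;> norm_num
  have hsBCval : sgn B * sgn C = 1 := by
    rw [hsBC]; rcases hsgn C with h | h <;> rw [h] <;> norm_num
  -- pattern values
  have pBAAB : patternOf ([B,A,A,B] : List α) = [0,1,1,0] := by
    simp [patternOf, List.idxOf_cons_self, List.idxOf_cons_ne, hAB, hAB.symm]
  have pABAB : patternOf ([A,B,A,B] : List α) = [0,1,0,1] := by
    simp [patternOf, List.idxOf_cons_self, List.idxOf_cons_ne, hAB, hAB.symm]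
  have pACAC : patternOf ([A,C,A,C] : List α) = [0,1,0,1] := by
    simp [patternOf, List.idxOf_cons_self, List.idxOf_cons_ne, hAC, hAC.symm]
  have pAACC : patternOf ([A,A,C,C] : List α) = [0,0,2,2] := by
    simp [patternOf, List.idxOf_cons_self, List.idxOf_cons_ne, hAC, hAC.symm]
  have pBCCB : patternOf ([B,C,C,B] : List α) = [0,1,1,0] := by
    simp [patternOf, List.idxOf_cons_self, List.idxOf_cons_ne, hBC, hBC.symm]
  have pBCBC : patternOf ([B,C,B,C] : List α) = [0,1,0,1] := by
    simp [patternOf, List.idxOf_cons_self, List.idxOf_cons_ne, hBC, hBC.symm]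
  have k1 := key_move x y z t A B C sgn hGauss hAB hAC hBC [0,0,1,1] rfl
  have k2 := key_move x y z t A B C sgn hGauss hAB hAC hBC [0,1,1,0] rfl
  have k3 := key_move x y z t A B C sgn hGauss hAB hAC hBC [0,1,0,1] rfl
  rw [pBAAB, pABAB, pACAC, pAACC, pBCCB, pBCBC, hsABval, hsACval, hsBCval,
    show patternOf [0,0,1,1] = [0,0,2,2] from rfl] at k1
  rw [pBAAB, pABAB, pACAC, pAACC, pBCCB, pBCBC, hsABval, hsACval, hsBCval,
    show patternOf [0,1,1,0] = [0,1,1,0] from rfl] at k2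
  rw [pBAAB, pABAB, pACAC, pAACC, pBCCB, pBCBC, hsABval, hsACval, hsBCval,
    show patternOf [0,1,0,1] = [0,1,0,1] from rfl] at k3
  norm_num at k1 k2 k3
  refine ⟨?_, ?_, ?_, by rw [hF], by rw [hF]⟩ <;>
    simp only [List.append_assoc, List.cons_append, List.singleton_append, List.nil_append] <;> linarith
end

section
/- Let v be a fake Gauss word of length n (a pattern whose double-point letters occur exactly twice and whose cusp letters occur exactly once), and for 0 ≤ k < n let rotᵏ v denote the cyclic rotation of v by k positions. Set ε₀ = 1 and ε_{k+1} = −ε_k if the occurrence rotated at step k+1 belongs to a double-point letter, ε_{k+1} = ε_k if it belongs to a cusp letter. Then for every front word w, the sum Σ_{k=0}^{n−1} ε_k ⟨rotᵏ v, w⟩ is unchanged when w is replaced by its image under either front base point move. (This is Proposition [ , ] for fronts, underlying the invariant FI₃.) -/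
open Finset

namespace FrontAux

variable {α : Type*} {β : Type*} [DecidableEq α] [DecidableEq β]

lemma indexOf_le_getElem : ∀ (l : List α) (i : ℕ) (h : i < l.length), l.idxOf l[i] ≤ i
  | c :: t, 0, _ => by simp
  | c :: t, i + 1, h => by
    have h' : i < t.length := by simpa using h
    have he : (c :: t)[i + 1] = t[i] := by simp
    by_cases hc : c = (c :: t)[i + 1]
    · rw [← hc, List.idxOf_cons_self]; omega
    · rw [he] at hc ⊢
      rw [List.idxOf_cons_ne _ hc]
      exact Nat.succ_le_succ (indexOf_le_getElem t i h')

lemma patternOf_length (l : List α) : (patternOf l).length = l.length := by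
  simp [patternOf]

lemma patternOf_eq_iff {l : List α} {m : List β} :
    patternOf l = patternOf m ↔
      ∃ h : l.length = m.length, ∀ i j (hi : i < l.length) (hj : j < l.length),
        (l[i] = l[j] ↔ m[i]'(h ▸ hi) = m[j]'(h ▸ hj)) := by
  constructor
  · intro hp
    have hlen : l.length = m.length := by
      have := congrArg List.length hp
      simpa [patternOf] using this
    refine ⟨hlen, fun i j hi hj => ?_⟩
    have key : ∀ k (hk : k < l.length),
        l.idxOf l[k] = m.idxOf (m[k]'(hlen ▸ hk)) := by
      intro k hk
      have h0 : (patternOf l)[k]? = (patternOf m)[k]? := by rw [hp]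
      simp only [patternOf, List.getElem?_map] at h0
      rw [List.getElem?_eq_getElem hk, List.getElem?_eq_getElem (hlen ▸ hk)] at h0
      simpa using h0
    have hml : l.idxOf l[i] = l.idxOf l[j] ↔ l[i] = l[j] :=
      List.idxOf_inj (List.getElem_mem _)
    have hmm : m.idxOf (m[i]'(hlen ▸ hi)) = m.idxOf (m[j]'(hlen ▸ hj)) ↔
        m[i]'(hlen ▸ hi) = m[j]'(hlen ▸ hj) :=
      List.idxOf_inj (List.getElem_mem _)
    rw [← hml, ← hmm, key i hi, key j hj]
  · rintro ⟨hlen, hrel⟩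
    apply List.ext_getElem (by simp [patternOf, hlen])
    intro k hk1 hk2
    have hk : k < l.length := by simpa [patternOf] using hk1
    have hk' : k < m.length := hlen ▸ hk
    simp only [patternOf, List.getElem_map]
    have hp1 : l.idxOf l[k] ≤ k := indexOf_le_getElem l k hk
    have hq1 : m.idxOf m[k] ≤ k := indexOf_le_getElem m k hk'
    set p := l.idxOf l[k] with hpdef
    set q := m.idxOf m[k] with hqdef
    have hplt : p < l.length := lt_of_le_of_lt hp1 hk
    have hqlt : q < m.length := lt_of_le_of_lt hq1 hk'
    have hqlt' : q < l.length := hlen ▸ hqlt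
    have hlp : l[p] = l[k] := List.getElem_idxOf hplt
    have hmq : m[q] = m[k] := List.getElem_idxOf hqlt
    have hmp : m[p]'(hlen ▸ hplt) = m[k]'hk' := (hrel p k hplt hk).mp hlp
    have hlq : l[q]'hqlt' = l[k] := (hrel q k hqlt' hk).mpr hmq
    have h1 : q ≤ p := by
      have := indexOf_le_getElem m p (hlen ▸ hplt)
      rwa [hmp] at this
    have h2 : p ≤ q := by
      have := indexOf_le_getElem l q hqlt'
      rwa [hlq] at this
    omega

lemma patternOf_rotate_one {l : List α} {m : List β} (h : patternOf l = patternOf m) :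
    patternOf (l.rotate 1) = patternOf (m.rotate 1) := by
  rw [patternOf_eq_iff] at h ⊢
  obtain ⟨hlen, hrel⟩ := h
  refine ⟨by simp [hlen], fun i j hi hj => ?_⟩
  have hi' : i < l.length := by simpa using hi
  have hj' : j < l.length := by simpa using hj
  have hL : 0 < l.length := Nat.pos_of_ne_zero (by omega)
  have hM : 0 < m.length := hlen ▸ hL
  rw [List.getElem_rotate l, List.getElem_rotate l, List.getElem_rotate m, List.getElem_rotate m]
  simp only [← hlen]
  exact hrel _ _ (Nat.mod_lt _ hL) (Nat.mod_lt _ hL)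

lemma patternOf_rotate (t : ℕ) {l : List α} {m : List β} (h : patternOf l = patternOf m) :
    patternOf (l.rotate t) = patternOf (m.rotate t) := by
  induction t with
  | zero => simpa using h
  | succ t ih =>
    have := patternOf_rotate_one ih
    rwa [List.rotate_rotate, List.rotate_rotate] at this

lemma patternOf_rotate_one_iff {l : List α} {m : List β} :
    patternOf (l.rotate 1) = patternOf (m.rotate 1) ↔ patternOf l = patternOf m := by
  refine ⟨fun h => ?_, patternOf_rotate_one⟩
  have hlen : l.length = m.length := by
    have := congrArg List.length h
    simpa [patternOf] using this
  rcases Nat.eq_zero_or_pos l.length with h0 | h0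
  · have hl : l = [] := List.length_eq_zero_iff.mp h0
    have hm : m = [] := List.length_eq_zero_iff.mp (hlen ▸ h0)
    rw [hl, hm]
    simp [patternOf]
  · have h2 := patternOf_rotate (l.length - 1) h
    rw [List.rotate_rotate, List.rotate_rotate] at h2
    have he : 1 + (l.length - 1) = l.length := by omega
    rw [he] at h2
    rw [List.rotate_length] at h2
    rw [hlen, List.rotate_length] at h2
    exact h2

lemma count_indexOf_patternOf {l : List α} {b : α} (hb : b ∈ l) :
    (patternOf l).count (l.idxOf b) = l.count b := by
  simp only [patternOf]
  rw [List.count_eq_countP, List.countP_map, List.count_eq_countP]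
  apply List.countP_congr
  intro x hx
  simp only [Function.comp, beq_iff_eq]
  constructor
  · intro hxy
    exact (List.idxOf_inj hx).mp hxy
  · intro hxy; rw [hxy]

lemma count_head_eq {a : α} {u : List α} {w : List β}
    (h : patternOf (a :: u) = patternOf w) (hw : 0 < w.length) :
    (a :: u).count a = w.count (w[0]) := by
  have h1 := count_indexOf_patternOf (l := a :: u) (b := a) (by simp)
  have h2 := count_indexOf_patternOf (l := w) (b := w[0]) (List.getElem_mem _)
  have e1 : (a :: u).idxOf a = 0 := List.idxOf_cons_self
  have e2 : w.idxOf w[0] = 0 := Nat.le_zero.mp (indexOf_le_getElem w 0 hw)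
  rw [e1] at h1
  rw [e2] at h2
  rw [← h1, ← h2, h]

lemma countP_double_even (l : List α) :
    2 ∣ l.countP (fun c => decide (l.count c = 2)) := by
  set p : α → Bool := fun c => decide (l.count c = 2) with hp
  rw [List.countP_eq_length_filter]
  have hlen : (l.filter p).length = ∑ a ∈ (l.filter p).toFinset, (l.filter p).count a := by
    have := Multiset.toFinset_sum_count_eq (l.filter p : Multiset α)
    simpa using this.symm
  rw [hlen]
  apply Finset.dvd_sum
  intro c hc
  have hcl : c ∈ l.filter p := List.mem_toFinset.mp hc
  have hpc : p c = true := (List.mem_filter.mp hcl).2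
  rw [List.count_filter hpc]
  have h2 : l.count c = 2 := by simpa [hp] using hpc
  rw [h2]

lemma sum_shift (n : ℕ) (F : ℕ → ℤ) :
    ∑ k ∈ Finset.range n, F k = ∑ k ∈ Finset.range n, F ((k + 1) % n) := by
  rcases Nat.eq_zero_or_pos n with rfl | hn
  · simp
  refine Finset.sum_nbij' (fun k => (k + (n - 1)) % n) (fun k => (k + 1) % n)
    ?_ ?_ ?_ ?_ ?_
  · intro k hk; exact Finset.mem_range.mpr (Nat.mod_lt _ hn)
  · intro k hk; exact Finset.mem_range.mpr (Nat.mod_lt _ hn)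
  · intro k hk
    have hk' : k < n := Finset.mem_range.mp hk
    show ((k + (n - 1)) % n + 1) % n = k
    rw [Nat.mod_add_mod]
    have : k + (n - 1) + 1 = k + n := by omega
    rw [this, Nat.add_mod_right, Nat.mod_eq_of_lt hk']
  · intro k hk
    have hk' : k < n := Finset.mem_range.mp hk
    show ((k + 1) % n + (n - 1)) % n = k
    rw [Nat.mod_add_mod]
    have : k + 1 + (n - 1) = k + n := by omega
    rw [this, Nat.add_mod_right, Nat.mod_eq_of_lt hk']
  · intro k hk
    have hk' : k < n := Finset.mem_range.mp hk
    show F k = F (((k + (n - 1)) % n + 1) % n)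
    rw [Nat.mod_add_mod]
    have : k + (n - 1) + 1 = k + n := by omega
    rw [this, Nat.add_mod_right, Nat.mod_eq_of_lt hk']

lemma eps_step (n : ℕ) (v : List ℕ) (hvlen : v.length = n) (k : ℕ) (hk : k < n) (m : ℕ)
    (hm12 : m = 1 ∨ m = 2) (hcnt : v.count (v[k]'(by omega)) = m) :
    (-1 : ℤ) ^ ((v.take ((k + 1) % n)).countP (fun c => decide (v.count c = 2))) *
      (if m = 2 then (-1 : ℤ) else 1) =
    (-1 : ℤ) ^ ((v.take k).countP (fun c => decide (v.count c = 2))) := by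
  have hkv : k < v.length := by omega
  set p : ℕ → Bool := fun c => decide (v.count c = 2) with hp
  set d : ℕ := if m = 2 then 1 else 0 with hd
  have hsingle : List.countP p [v[k]'hkv] = d := by
    simp only [List.countP_cons, List.countP_nil, hp, hd, hcnt]
    rcases hm12 with rfl | rfl <;> simp
  have htake : (v.take (k + 1)).countP p = (v.take k).countP p + d := by
    rw [List.take_succ, List.getElem?_eq_getElem hkv]
    simp only [List.countP_append]
    rw [show (some (v[k]'hkv)).toList = [v[k]'hkv] from rfl, hsingle]
  rcases Nat.lt_or_ge (k + 1) n with hlt | hge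
  · rw [Nat.mod_eq_of_lt hlt, htake]
    rcases hm12 with rfl | rfl
    · simp [hd]
    · simp only [hd, if_pos rfl, reduceIte]
      rw [pow_succ]; ring
  · have hkn : k + 1 = n := by omega
    rw [hkn, Nat.mod_self]
    simp only [List.take_zero, List.countP_nil, pow_zero, one_mul]
    have heven : 2 ∣ v.countP p := countP_double_even v
    have hsplit : v.countP p = (v.take k).countP p + d := by
      conv_lhs => rw [← List.take_append_drop k v]
      rw [List.countP_append]
      congr 1
      have hdrop : v.drop k = [v[k]'hkv] := by
        rw [List.drop_eq_getElem_cons hkv]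
        congr 1
        apply List.drop_eq_nil_of_le
        omega
      rw [hdrop, hsingle]
    rcases hm12 with rfl | rfl
    · have hd0 : d = 0 := by simp [hd]
      rw [hd0] at hsplit
      norm_num at hsplit ⊢
      have hev : Even ((v.take k).countP p) := by
        rw [Nat.even_iff]; omega
      rw [hev.neg_one_pow]
    · have hd1 : d = 1 := by simp [hd]
      rw [hd1] at hsplit
      norm_num at hsplit ⊢
      have hod : Odd ((v.take k).countP p) := by
        rw [Nat.odd_iff]; omega
      rw [hod.neg_one_pow]

lemma key (n : ℕ) (v : List ℕ) (hvlen : v.length = n)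
    (a : α) (x : List α) (sgn sgn' : α → ℤ) (m : ℕ) (hm12 : m = 1 ∨ m = 2)
    (hma : (a :: x).count a = m)
    (hs : ∀ c, c ≠ a → sgn' c = sgn c)
    (hsa : sgn' a = (if m = 2 then (-1 : ℤ) else 1) * sgn a) :
    ∑ k ∈ Finset.range n,
        (-1 : ℤ) ^ ((v.take k).countP (fun c => decide (v.count c = 2))) *
          pair (v.rotate k) (a :: x) sgn =
      ∑ k ∈ Finset.range n,
        (-1 : ℤ) ^ ((v.take k).countP (fun c => decide (v.count c = 2))) *
          pair (v.rotate k) (x ++ [a]) sgn' := by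
  have hTF : (x ++ [a]).toFinset = (a :: x).toFinset := by
    ext c; simp [or_comm]
  simp only [pair, Finset.mul_sum, hTF]
  rw [Finset.sum_comm, Finset.sum_comm (s := Finset.range n)]
  apply Finset.sum_congr rfl
  intro S hS
  by_cases haS : a ∈ S
  · -- the letter a lies in S
    have h1 : subword (a :: x) S = a :: subword x S := by
      simp [subword, haS]
    have h2 : subword (x ++ [a]) S = subword x S ++ [a] := by
      simp [subword, haS]
    have hrot : subword x S ++ [a] = (a :: subword x S).rotate 1 := by
      rw [show (1 : ℕ) = 0 + 1 from rfl, List.rotate_cons_succ, List.rotate_zero]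
    have hδ : ∏ c ∈ S, sgn' c = (if m = 2 then (-1 : ℤ) else 1) * ∏ c ∈ S, sgn c := by
      rw [← Finset.mul_prod_erase S sgn' haS, ← Finset.mul_prod_erase S sgn haS, hsa]
      rw [Finset.prod_congr rfl (fun c hc => hs c (Finset.ne_of_mem_erase hc))]
      ring
    have hcount_a : (a :: subword x S).count a = m := by
      have hxc : (subword x S).count a = x.count a := by
        simp only [subword]
        exact List.count_filter (by simpa using haS)
      rw [List.count_cons_self, hxc]
      rw [List.count_cons_self] at hma
      exact hma
    rw [h1, h2]
    refine Eq.trans ?_ (sum_shift n _).symm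
    apply Finset.sum_congr rfl
    intro k hkr
    have hk : k < n := Finset.mem_range.mp hkr
    have hv1 : v.rotate ((k + 1) % n) = (v.rotate k).rotate 1 := by
      rw [List.rotate_rotate, ← hvlen, List.rotate_mod]
    have hcond : (patternOf (subword x S ++ [a]) = patternOf (v.rotate ((k + 1) % n))) ↔
        (patternOf (a :: subword x S) = patternOf (v.rotate k)) := by
      rw [hrot, hv1]
      exact patternOf_rotate_one_iff
    by_cases hc : patternOf (a :: subword x S) = patternOf (v.rotate k)
    · rw [if_pos hc, if_pos (hcond.mpr hc), hδ]
      have hpos : 0 < (v.rotate k).length := by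
        rw [List.length_rotate, hvlen]; omega
      have hhead : (v.rotate k).count ((v.rotate k)[0]) = m := by
        rw [← count_head_eq hc hpos]; exact hcount_a
      have hget : (v.rotate k)[0]'hpos = v[k]'(by omega) := by
        rw [List.getElem_rotate]
        congr 1
        simp [Nat.mod_eq_of_lt, hvlen, hk]
      have hcnt : v.count (v[k]'(by omega)) = m := by
        rw [← hget, ← (List.rotate_perm v k).count_eq]
        exact hhead
      have heps := eps_step n v hvlen k hk m hm12 hcnt
      rw [← heps]
      ring
    · rw [if_neg hc, if_neg (fun hcc => hc (hcond.mp hcc))]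
      ring
  · -- the letter a does not lie in S
    have h1 : subword (a :: x) S = subword x S := by
      simp [subword, haS]
    have h2 : subword (x ++ [a]) S = subword x S := by
      simp [subword, haS]
    have h3 : ∏ c ∈ S, sgn' c = ∏ c ∈ S, sgn c :=
      Finset.prod_congr rfl (fun c hc => hs c (by rintro rfl; exact haS hc))
    apply Finset.sum_congr rfl
    intro k _
    rw [h1, h2, h3]

end FrontAux

/-- for a fake Gauss word `v` of length `n` (double-point letters
occur twice, cusp letters once), with signs `ε_k = (−1)^(number of occurrences of
double-point letters among the first k positions)`, the sum
`Σ_{k<n} ε_k ⟨rotᵏ v, w⟩` is unchanged when the front word `w` is replaced by its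
image under either front base point move. -/
theorem front_cyclic_sum_base_point_invariant {α : Type*} [DecidableEq α]
    (n : ℕ) (v : List ℕ) (hvlen : v.length = n)
    (hvFake : ∀ c ∈ v, v.count c = 1 ∨ v.count c = 2)
    (a : α) (x : List α) (sgn : α → ℤ)
    (hFront : ∀ c ∈ a :: x, (a :: x).count c = 1 ∨ (a :: x).count c = 2)
    (hsgn : ∀ c, sgn c = 1 ∨ sgn c = -1) :
    ((a :: x).count a = 2 →
      ∑ k ∈ Finset.range n,
          (-1 : ℤ) ^ ((v.take k).countP (fun c => decide (v.count c = 2))) *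
            pair (v.rotate k) (a :: x) sgn =
        ∑ k ∈ Finset.range n,
          (-1 : ℤ) ^ ((v.take k).countP (fun c => decide (v.count c = 2))) *
            pair (v.rotate k) (x ++ [a]) (Function.update sgn a (-(sgn a)))) ∧
    ((a :: x).count a = 1 →
      ∑ k ∈ Finset.range n,
          (-1 : ℤ) ^ ((v.take k).countP (fun c => decide (v.count c = 2))) *
            pair (v.rotate k) (a :: x) sgn =
        ∑ k ∈ Finset.range n,
          (-1 : ℤ) ^ ((v.take k).countP (fun c => decide (v.count c = 2))) *
            pair (v.rotate k) (x ++ [a]) sgn) := by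
  constructor
  · intro h2
    refine FrontAux.key n v hvlen a x sgn _ 2 (Or.inr rfl) h2 ?_ ?_
    · intro c hc; exact Function.update_of_ne hc _ _
    · rw [Function.update_self]; norm_num
  · intro h1
    refine FrontAux.key n v hvlen a x sgn sgn 1 (Or.inl rfl) h1 ?_ ?_
    · intro c _; rfl
    · norm_num
end
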